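/- arXiv:math/0303094 — 8 statements merged into one kernel-verified Lean document; each statement's English description precedes it below -/
import Mathlib

section
/- Let A be an m×n matrix with nonnegative integer entries and b a vector in ℕ^m. If the polynomial z^b - 1 (i.e., z_1^{b_1}···z_m^{b_m} - 1) can be written as ∑_{j=1}^n Q_j(z)(z^{A_j} - 1), where A_j denotes the j-th column of A and each Q_j is a polynomial in ℝ[z_1,…,z_m] with nonnegative coefficients, then the system Ax = b has a solution x ∈ ℕ^n. -/
open MvPolynomial

theorem discrete_farkas_sufficiency
    (m n : ℕ) (A : Matrix (Fin m) (Fin n) ℕ) (b : Fin m → ℕ)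
    (Q : Fin n → MvPolynomial (Fin m) ℝ)
    (hQ : ∀ j d, 0 ≤ (Q j).coeff d)
    (h : (∏ i, X i ^ b i : MvPolynomial (Fin m) ℝ) - 1 =
        ∑ j, Q j * ((∏ i, X i ^ A i j) - 1)) :
    ∃ x : Fin n → ℕ, ∀ i, ∑ j, A i j * x j = b i := by
  classical
  -- monomial normal forms
  have mono : ∀ f : Fin m → ℕ, (∏ i, X i ^ f i : MvPolynomial (Fin m) ℝ)
      = monomial (Finsupp.equivFunOnFinite.symm f) 1 := by
    intro f
    rw [monomial_eq, map_one, one_mul, Finsupp.prod_fintype]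
    · rfl
    · exact fun i => pow_zero _
  set bf : Fin m →₀ ℕ := Finsupp.equivFunOnFinite.symm b with hbf
  set c : Fin n → (Fin m →₀ ℕ) := fun j => Finsupp.equivFunOnFinite.symm (fun i => A i j) with hc
  -- rearranged polynomial identity with nonnegative sides
  have h' : (monomial bf 1 : MvPolynomial (Fin m) ℝ) + ∑ j, Q j
      = 1 + ∑ j, Q j * monomial (c j) 1 := by
    have h2 : (monomial bf 1 : MvPolynomial (Fin m) ℝ) - 1
        = (∑ j, Q j * monomial (c j) 1) - ∑ j, Q j := by
      rw [← Finset.sum_sub_distrib]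
      rw [mono b] at h
      simp_rw [mono] at h
      simpa [mul_sub] using h
    linear_combination h2
  -- reachability relation
  set step : (Fin m →₀ ℕ) → (Fin m →₀ ℕ) → Prop :=
    fun α β => ∃ j, 0 < (Q j).coeff α ∧ β = α + c j with hstep
  set Reach : (Fin m →₀ ℕ) → Prop := fun α => Relation.ReflTransGen step 0 α with hReach
  -- finite universe of relevant exponents
  set T : Finset (Fin m →₀ ℕ) :=
    {0, bf} ∪ Finset.univ.biUnion
      (fun j => (Q j).support ∪ (Q j).support.image (· + c j)) with hT
  set F : Finset (Fin m →₀ ℕ) := T.filter Reach with hF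
  have h0F : (0 : Fin m →₀ ℕ) ∈ F := by
    refine Finset.mem_filter.2 ⟨?_, Relation.ReflTransGen.refl⟩
    simp [hT]
  -- F closed under a positive step
  have hclose : ∀ j, ∀ α ∈ F, (Q j).coeff α ≠ 0 → α + c j ∈ F := by
    intro j α hα hne
    rcases Finset.mem_filter.1 hα with ⟨-, hr⟩
    refine Finset.mem_filter.2 ⟨?_, hr.tail ⟨j, lt_of_le_of_ne (hQ j α) (Ne.symm hne), rfl⟩⟩
    simp only [hT, Finset.mem_union, Finset.mem_biUnion]
    right
    exact ⟨j, Finset.mem_univ j, Or.inr (Finset.mem_image.2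
      ⟨α, MvPolynomial.mem_support_iff.2 hne, rfl⟩)⟩
  -- sum the coefficient identity over F
  have hsum : (∑ α ∈ F, coeff α ((monomial bf 1 : MvPolynomial (Fin m) ℝ) + ∑ j, Q j))
      = ∑ α ∈ F, coeff α ((1 : MvPolynomial (Fin m) ℝ) + ∑ j, Q j * monomial (c j) 1) := by
    rw [h']
  have hL : (∑ α ∈ F, coeff α ((monomial bf 1 : MvPolynomial (Fin m) ℝ) + ∑ j, Q j))
      = (if bf ∈ F then (1:ℝ) else 0) + ∑ j, ∑ α ∈ F, (Q j).coeff α := by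
    simp_rw [coeff_add, Finset.sum_add_distrib, coeff_sum, coeff_monomial]
    rw [Finset.sum_ite_eq, Finset.sum_comm]
  have hR : (∑ α ∈ F, coeff α ((1 : MvPolynomial (Fin m) ℝ) + ∑ j, Q j * monomial (c j) 1))
      = 1 + ∑ j, ∑ α ∈ F, (if c j ≤ α then (Q j).coeff (α - c j) else 0) := by
    simp_rw [coeff_add, Finset.sum_add_distrib, coeff_sum, coeff_mul_monomial', mul_one]
    congr 1
    · simp_rw [MvPolynomial.coeff_one]
      rw [Finset.sum_ite_eq, if_pos h0F]
    · rw [Finset.sum_comm]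
  -- per-column inequality
  have hineq : ∀ j, (∑ α ∈ F, (Q j).coeff α)
      ≤ ∑ α ∈ F, (if c j ≤ α then (Q j).coeff (α - c j) else 0) := by
    intro j
    have h1 : (∑ α ∈ F, (Q j).coeff α) = ∑ α ∈ F.filter (fun α => (Q j).coeff α ≠ 0), (Q j).coeff α := by
      rw [Finset.sum_filter_ne_zero]
    rw [h1]
    have himg : (F.filter (fun α => (Q j).coeff α ≠ 0)).image (· + c j) ⊆ F := by
      intro β hβ
      rcases Finset.mem_image.1 hβ with ⟨α, hα, rfl⟩
      rcases Finset.mem_filter.1 hα with ⟨hαF, hne⟩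
      exact hclose j α hαF hne
    calc ∑ α ∈ F.filter (fun α => (Q j).coeff α ≠ 0), (Q j).coeff α
        = ∑ β ∈ (F.filter (fun α => (Q j).coeff α ≠ 0)).image (· + c j),
            (if c j ≤ β then (Q j).coeff (β - c j) else 0) := by
          rw [Finset.sum_image (fun a _ b _ hab => by simpa using hab)]
          refine Finset.sum_congr rfl fun α _ => ?_
          rw [if_pos le_add_self, add_tsub_cancel_right]
      _ ≤ ∑ α ∈ F, (if c j ≤ α then (Q j).coeff (α - c j) else 0) := by
          refine Finset.sum_le_sum_of_subset_of_nonneg himg fun α _ _ => ?_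
          split <;> [exact hQ j _; exact le_rfl]
  -- conclude bf ∈ F
  have hbF : bf ∈ F := by
    by_contra hbF
    rw [hL, hR, if_neg hbF, zero_add] at hsum
    have : (1:ℝ) + ∑ j, ∑ α ∈ F, (if c j ≤ α then (Q j).coeff (α - c j) else 0)
        ≤ ∑ j, ∑ α ∈ F, (Q j).coeff α := hsum ▸ le_rfl
    have h2 := Finset.sum_le_sum (s := Finset.univ) (fun j _ => hineq j)
    linarith
  -- extract a lattice path giving the representation
  have hreach : Reach bf := (Finset.mem_filter.1 hbF).2
  have key : ∀ β : Fin m →₀ ℕ, Reach β → ∃ x : Fin n → ℕ, (∑ j, x j • c j) = β := by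
    intro β hβ
    induction hβ with
    | refl => exact ⟨0, by simp⟩
    | tail h' hst ih =>
      rcases ih with ⟨x, hx⟩
      rcases hst with ⟨j, -, rfl⟩
      refine ⟨fun j' => x j' + if j' = j then 1 else 0, ?_⟩
      simp_rw [add_smul, Finset.sum_add_distrib, hx, ite_smul, one_smul, zero_smul]
      rw [Finset.sum_ite_eq', if_pos (Finset.mem_univ j)]
  rcases key bf hreach with ⟨x, hx⟩
  refine ⟨x, fun i => ?_⟩
  have := congrArg (fun f : Fin m →₀ ℕ => f i) hx
  simpa [Finsupp.finset_sum_apply, hc, hbf, mul_comm] using this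
end

section
/- Let A ∈ ℕ^{m×n} and b ∈ ℕ^m. Then the system Ax = b has a solution x ∈ ℕ^n if and only if the polynomial z^b - 1 can be written as ∑_{j=1}^n Q_j(z)(z^{A_j} - 1) for some polynomials Q_j ∈ ℝ[z_1,…,z_m] with nonnegative coefficients (discrete Farkas lemma). -/
open MvPolynomial Finset

/-- Product of variable powers over all of `Fin m` as a monomial. -/
lemma dfl_prod_X_pow {m : ℕ} (w : Fin m → ℕ) :
    (∏ i, X i ^ w i : MvPolynomial (Fin m) ℝ) =
      monomial (Finsupp.equivFunOnFinite.symm w) 1 := by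
  classical
  rw [← prod_X_pow_eq_monomial]
  symm
  apply Finset.prod_subset (Finset.subset_univ _)
  intro i _ hi
  rw [Finsupp.notMem_support_iff.mp hi, pow_zero]

lemma dfl_phi_monomial {m : ℕ} (P : (Fin m →₀ ℕ) → Prop) [DecidablePred P]
    (d : Fin m →₀ ℕ) (c : ℝ) :
    (Finsupp.lsum ℝ (fun d => if P d then (LinearMap.id : ℝ →ₗ[ℝ] ℝ) else 0) ∘ₗ
      (AddMonoidAlgebra.coeffLinearEquiv ℝ).toLinearMap)
      (monomial d c : MvPolynomial (Fin m) ℝ) = if P d then c else 0 := by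
  show Finsupp.lsum ℝ _ (Finsupp.single d c) = _
  rw [Finsupp.lsum_single]
  split <;> simp

section NN
variable {m : ℕ}

def dflNN (p : MvPolynomial (Fin m) ℝ) : Prop := ∀ d, 0 ≤ p.coeff d

lemma dflNN_monomial {v : Fin m →₀ ℕ} {c : ℝ} (hc : 0 ≤ c) : dflNN (monomial v c) := by
  intro d
  rw [coeff_monomial]
  split <;> simp [hc]

lemma dflNN_one : dflNN (1 : MvPolynomial (Fin m) ℝ) := by
  simpa using dflNN_monomial (v := (0 : Fin m →₀ ℕ)) (le_of_lt one_pos)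

lemma dflNN_mul {p q : MvPolynomial (Fin m) ℝ} (hp : dflNN p) (hq : dflNN q) :
    dflNN (p * q) := by
  intro d
  rw [coeff_mul]
  exact Finset.sum_nonneg fun x _ => mul_nonneg (hp _) (hq _)

lemma dflNN_pow {p : MvPolynomial (Fin m) ℝ} (hp : dflNN p) (k : ℕ) : dflNN (p ^ k) := by
  induction k with
  | zero => simpa using dflNN_one
  | succ k ih => rw [pow_succ]; exact dflNN_mul ih hp

lemma dflNN_sum {α : Type*} (s : Finset α) (f : α → MvPolynomial (Fin m) ℝ)
    (h : ∀ a ∈ s, dflNN (f a)) : dflNN (∑ a ∈ s, f a) := by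
  intro d
  rw [coeff_sum]
  exact Finset.sum_nonneg fun a ha => h a ha d

lemma dflNN_prod {α : Type*} (s : Finset α) (f : α → MvPolynomial (Fin m) ℝ)
    (h : ∀ a ∈ s, dflNN (f a)) : dflNN (∏ a ∈ s, f a) :=
  Finset.prod_induction f dflNN (fun _ _ => dflNN_mul) dflNN_one h

lemma dflNN_X (i : Fin m) : dflNN (X i : MvPolynomial (Fin m) ℝ) := by
  have : (X i : MvPolynomial (Fin m) ℝ) = monomial (Finsupp.single i 1) 1 := by
    rw [← X_pow_eq_monomial, pow_one]
  rw [this]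
  exact dflNN_monomial (le_of_lt one_pos)

end NN

theorem discrete_farkas_lemma
    (m n : ℕ) (A : Matrix (Fin m) (Fin n) ℕ) (b : Fin m → ℕ) :
    (∃ x : Fin n → ℕ, ∀ i, ∑ j, A i j * x j = b i) ↔
    (∃ Q : Fin n → MvPolynomial (Fin m) ℝ,
      (∀ j d, 0 ≤ (Q j).coeff d) ∧
      (∏ i, X i ^ b i : MvPolynomial (Fin m) ℝ) - 1 =
        ∑ j, Q j * ((∏ i, X i ^ A i j) - 1)) := by
  classical
  set M : Fin n → MvPolynomial (Fin m) ℝ := fun j => ∏ i, X i ^ A i j with hM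
  constructor
  · rintro ⟨x, hx⟩
    -- extension of `fun j => M j ^ x j` to ℕ
    set g : ℕ → MvPolynomial (Fin m) ℝ :=
      fun l => if h : l < n then M ⟨l, h⟩ ^ x ⟨l, h⟩ else 1 with hg
    set P : ℕ → MvPolynomial (Fin m) ℝ := fun k => ∏ l ∈ Finset.range k, g l with hP
    have hNNM : ∀ j : Fin n, dflNN (M j) := fun j => by
      simp only [hM]
      exact dflNN_prod _ _ fun i _ => dflNN_pow (dflNN_X i) _
    have hgj : ∀ j : Fin n, g j.val = M j ^ x j := fun j => by
      simp only [hg]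
      rw [dif_pos j.isLt]
    refine ⟨fun j => P j.val * ∑ k ∈ Finset.range (x j), M j ^ k, ?_, ?_⟩
    · intro j d
      apply dflNN_mul
      · simp only [hP]
        apply dflNN_prod
        intro l _
        simp only [hg]
        by_cases h : l < n
        · rw [dif_pos h]; exact dflNN_pow (hNNM _) _
        · rw [dif_neg h]; exact dflNN_one
      · exact dflNN_sum _ _ fun k _ => dflNN_pow (hNNM j) _
    · have key : ∀ j : Fin n,
          (P j.val * ∑ k ∈ Finset.range (x j), M j ^ k) * (M j - 1)
            = P (j.val + 1) - P j.val := by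
        intro j
        rw [mul_assoc, geom_sum_mul]
        have hsucc : P (j.val + 1) = P j.val * g j.val := Finset.prod_range_succ g j.val
        rw [hsucc, hgj j, mul_sub, mul_one]
      have hP0 : P 0 = 1 := Finset.prod_range_zero g
      have hPn : P n = ∏ j : Fin n, M j ^ x j := by
        have h1 : (∏ l ∈ Finset.range n, g l) = ∏ j : Fin n, g j.val :=
          (Fin.prod_univ_eq_prod_range g n).symm
        rw [show P n = ∏ l ∈ Finset.range n, g l from rfl, h1]
        exact Finset.prod_congr rfl fun j _ => hgj j
      have hbM : (∏ i, X i ^ b i : MvPolynomial (Fin m) ℝ) = ∏ j, M j ^ x j := by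
        have h1 : ∀ j : Fin n, M j ^ x j = ∏ i, X i ^ (A i j * x j) := fun j => by
          simp only [hM, ← Finset.prod_pow]
          exact Finset.prod_congr rfl fun i _ => (pow_mul _ _ _).symm
        symm
        calc (∏ j, M j ^ x j)
            = ∏ j, ∏ i, X i ^ (A i j * x j) := Finset.prod_congr rfl fun j _ => h1 j
          _ = ∏ i, ∏ j, X i ^ (A i j * x j) := Finset.prod_comm
          _ = ∏ i, X i ^ (∑ j, A i j * x j) :=
              Finset.prod_congr rfl fun i _ => Finset.prod_pow_eq_pow_sum _ _ _
          _ = ∏ i, X i ^ b i := Finset.prod_congr rfl fun i _ => by rw [hx i]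
      calc (∏ i, X i ^ b i : MvPolynomial (Fin m) ℝ) - 1
          = P n - P 0 := by rw [hPn, hP0, hbM]
        _ = ∑ k ∈ Finset.range n, (P (k + 1) - P k) := (Finset.sum_range_sub P n).symm
        _ = ∑ j : Fin n, (P (j.val + 1) - P j.val) :=
            (Fin.sum_univ_eq_sum_range (fun k => P (k + 1) - P k) n).symm
        _ = ∑ j : Fin n, (P j.val * ∑ k ∈ Finset.range (x j), M j ^ k) * (M j - 1) :=
            Finset.sum_congr rfl fun j _ => (key j).symm
  · rintro ⟨Q, hQ, hEq⟩
    by_contra hb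
    set Pred : (Fin m →₀ ℕ) → Prop :=
      fun d => ∃ x : Fin n → ℕ, ∀ i, ∑ j, A i j * x j = d i with hPred
    set φ : MvPolynomial (Fin m) ℝ →ₗ[ℝ] ℝ :=
      Finsupp.lsum ℝ (fun d => if Pred d then (LinearMap.id : ℝ →ₗ[ℝ] ℝ) else 0) ∘ₗ
        (AddMonoidAlgebra.coeffLinearEquiv ℝ).toLinearMap with hφ
    have φmon : ∀ (d : Fin m →₀ ℕ) (c : ℝ),
        φ (monomial d c) = if Pred d then c else 0 := fun d c =>
      dfl_phi_monomial Pred d c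
    set W : Fin n → (Fin m →₀ ℕ) :=
      fun j => Finsupp.equivFunOnFinite.symm (fun i => A i j) with hWdef
    have hW : ∀ j i, W j i = A i j := fun j i => rfl
    have hone : (1 : MvPolynomial (Fin m) ℝ) = monomial 0 1 := by
      rw [monomial_zero', C_1]
    -- Pred is closed under adding columns
    have hclosed : ∀ (j : Fin n) (d : Fin m →₀ ℕ), Pred d → Pred (d + W j) := by
      rintro j d ⟨x, hx⟩
      refine ⟨fun j' => x j' + if j' = j then 1 else 0, fun i => ?_⟩
      have h1 : ∀ j' : Fin n, A i j' * (x j' + if j' = j then 1 else 0)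
          = A i j' * x j' + (if j' = j then A i j' else 0) := by
        intro j'; rw [mul_add]; split <;> simp
      rw [Finset.sum_congr rfl fun j' _ => h1 j', Finset.sum_add_distrib, hx i,
        Finset.sum_ite_eq' Finset.univ j (fun j' => A i j')]
      simp [Finsupp.add_apply, hW j i]
    have h0 : Pred 0 := ⟨fun _ => 0, fun i => by simp⟩
    have hnb : ¬ Pred (Finsupp.equivFunOnFinite.symm b) := by
      rintro ⟨x, hx⟩
      exact hb ⟨x, fun i => hx i⟩
    -- φ of each summand on the right is nonnegative
    have hRHS : ∀ j : Fin n, 0 ≤ φ (Q j * (M j - 1)) := by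
      intro j
      have hMj : M j = monomial (W j) 1 := dfl_prod_X_pow _
      rw [mul_sub, mul_one, map_sub, hMj]
      have hQrw : Q j = ∑ v ∈ (Q j).support, monomial v ((Q j).coeff v) := as_sum (Q j)
      rw [hQrw, Finset.sum_mul, map_sum, map_sum, ← Finset.sum_sub_distrib]
      refine Finset.sum_nonneg fun v _ => ?_
      rw [monomial_mul, mul_one, φmon, φmon]
      by_cases hv : Pred v
      · rw [if_pos hv, if_pos (hclosed j v hv), sub_self]
      · rw [if_neg hv, sub_zero]
        split
        · exact hQ j v
        · exact le_refl 0
    have hL : φ ((∏ i, X i ^ b i : MvPolynomial (Fin m) ℝ) - 1) = -1 := by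
      rw [map_sub, dfl_prod_X_pow, hone, φmon, φmon, if_neg hnb, if_pos h0]
      ring
    have hR : 0 ≤ φ (∑ j, Q j * (M j - 1)) := by
      rw [map_sum]
      exact Finset.sum_nonneg fun j _ => hRHS j
    rw [hEq] at hL
    rw [hL] at hR
    linarith
end

section
/- Let A ∈ ℕ^{m×n} and b ∈ ℕ^m, and suppose Ax = b has a solution x ∈ ℕ^n. Then z^b - 1 = ∑_{j=1}^n Q_j(z)(z^{A_j} - 1) for polynomials Q_j with nonnegative coefficients whose degrees are all bounded by b* := (∑_{j=1}^m b_j) - min_{k} ∑_{j=1}^m A_{jk}. -/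
open MvPolynomial

private lemma coeff_nonneg_mul {σ : Type*} [DecidableEq σ] (p q : MvPolynomial σ ℝ)
    (hp : ∀ d, 0 ≤ p.coeff d) (hq : ∀ d, 0 ≤ q.coeff d) :
    ∀ d, 0 ≤ (p * q).coeff d := by
  intro d
  rw [coeff_mul]
  exact Finset.sum_nonneg fun y _ => mul_nonneg (hp _) (hq _)

private lemma coeff_nonneg_prod_X_pow {m : ℕ} (a : Fin m → ℕ) :
    ∀ d, 0 ≤ ((∏ i, X i ^ a i : MvPolynomial (Fin m) ℝ)).coeff d := by
  intro d
  refine Finset.prod_induction _ (fun (p : MvPolynomial (Fin m) ℝ) => ∀ d, 0 ≤ p.coeff d) ?_ ?_ ?_ d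
  · exact fun p q hp hq => coeff_nonneg_mul p q hp hq
  · intro d; rw [coeff_one]; split <;> norm_num
  · intro i _ d
    rw [MvPolynomial.coeff_X_pow]
    split <;> norm_num

private lemma totalDegree_prod_X_pow {m : ℕ} (a : Fin m → ℕ) :
    ((∏ i, X i ^ a i : MvPolynomial (Fin m) ℝ)).totalDegree ≤ ∑ i, a i := by
  refine le_trans (MvPolynomial.totalDegree_finset_prod _ _) ?_
  refine Finset.sum_le_sum fun i _ => ?_
  rw [MvPolynomial.totalDegree_X_pow]

private lemma discrete_farkas_aux {m n : ℕ} (A : Matrix (Fin m) (Fin n) ℕ) :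
    ∀ N (x : Fin n → ℕ), ∑ j, x j ≤ N →
    ∃ Q : Fin n → MvPolynomial (Fin m) ℝ,
      (∀ j d, 0 ≤ (Q j).coeff d) ∧
      (∀ j, Q j = 0 ∨
        (Q j).totalDegree + (⨅ k, ∑ i, A i k) ≤ ∑ i, ∑ j, A i j * x j) ∧
      (∏ i, X i ^ (∑ j, A i j * x j) : MvPolynomial (Fin m) ℝ) - 1 =
        ∑ j, Q j * ((∏ i, X i ^ A i j) - 1) := by
  intro N
  induction N with
  | zero =>
    intro x hx
    have hx0 : ∀ j, x j = 0 := by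
      intro j
      exact Finset.sum_eq_zero_iff.mp (Nat.eq_zero_of_le_zero hx) j (Finset.mem_univ j)
    refine ⟨0, by simp, by simp, ?_⟩
    have : ∀ i, ∑ j, A i j * x j = 0 := by
      intro i
      refine Finset.sum_eq_zero fun j _ => by rw [hx0 j, mul_zero]
    simp [this]
  | succ N ih =>
    intro x hx
    by_cases h0 : ∀ j, x j = 0
    · refine ⟨0, by simp, by simp, ?_⟩
      have : ∀ i, ∑ j, A i j * x j = 0 := by
        intro i
        refine Finset.sum_eq_zero fun j _ => by rw [h0 j, mul_zero]
      simp [this]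
    · push_neg at h0
      obtain ⟨k, hk⟩ := h0
      have hkpos : 1 ≤ x k := Nat.one_le_iff_ne_zero.mpr hk
      set x' : Fin n → ℕ := Function.update x k (x k - 1) with hx'def
      have hx'sum : ∑ j, x' j ≤ N := by
        have h1 : ∑ j, x' j = (x k - 1) + ∑ j ∈ Finset.univ \ {k}, x j := by
          simp only [hx'def]
          exact Finset.sum_update_of_mem (Finset.mem_univ k) _ _
        have h2 : ∑ j, x j = x k + ∑ j ∈ Finset.univ \ {k}, x j :=
          Finset.sum_eq_add_sum_sdiff_singleton_of_mem (Finset.mem_univ k) _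
        omega
      obtain ⟨Q', hQ'pos, hQ'deg, hQ'eq⟩ := ih x' hx'sum
      have hb : ∀ i, ∑ j, A i j * x j = A i k + ∑ j, A i j * x' j := by
        intro i
        obtain ⟨c, hc⟩ : ∃ c, x k = c + 1 := ⟨x k - 1, by omega⟩
        have hupd : (fun j => A i j * x' j)
            = Function.update (fun j => A i j * x j) k (A i k * c) := by
          funext j
          rcases eq_or_ne j k with rfl | h
          · simp [hx'def, hc]
          · simp [hx'def, Function.update_of_ne h]
        calc ∑ j, A i j * x j
            = A i k * x k + ∑ j ∈ Finset.univ \ {k}, A i j * x j :=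
              Finset.sum_eq_add_sum_sdiff_singleton_of_mem (Finset.mem_univ k) _
          _ = A i k + (A i k * c + ∑ j ∈ Finset.univ \ {k}, A i j * x j) := by
              rw [hc]; ring
          _ = A i k + ∑ j, A i j * x' j := by
              rw [show (∑ j, A i j * x' j) = ∑ j, Function.update (fun j => A i j * x j) k (A i k * c) j from by rw [← hupd],
                Finset.sum_update_of_mem (Finset.mem_univ k)]
      set M : MvPolynomial (Fin m) ℝ := ∏ i, X i ^ A i k with hMdef
      refine ⟨fun j => M * Q' j + if j = k then 1 else 0, ?_, ?_, ?_⟩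
      · intro j d
        have h1 : 0 ≤ (M * Q' j).coeff d :=
          coeff_nonneg_mul _ _ (coeff_nonneg_prod_X_pow _) (hQ'pos j) d
        have h2 : (0:ℝ) ≤ ((if j = k then (1:MvPolynomial (Fin m) ℝ) else 0)).coeff d := by
          split
          · rw [coeff_one]; split <;> norm_num
          · simp
        rw [coeff_add]
        exact add_nonneg h1 h2
      · intro j
        have hSb : ∑ i, ∑ j, A i j * x j = (∑ i, A i k) + ∑ i, ∑ j, A i j * x' j := by
          rw [← Finset.sum_add_distrib]
          exact Finset.sum_congr rfl fun i _ => hb i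
        have hinf : (⨅ k, ∑ i, A i k) ≤ ∑ i, A i k :=
          ciInf_le (OrderBot.bddBelow _) k
        have hMdeg : M.totalDegree ≤ ∑ i, A i k := totalDegree_prod_X_pow _
        by_cases hjk : j = k
        · right
          subst hjk
          simp only [eq_self_iff_true, if_true]
          rcases hQ'deg j with h | h
          · rw [h, mul_zero, zero_add, totalDegree_one, zero_add, hSb]
            omega
          · have hd : (M * Q' j + 1).totalDegree ≤ (M * Q' j).totalDegree := by
              refine le_trans (totalDegree_add _ _) ?_
              rw [totalDegree_one]
              exact le_of_eq (max_eq_left (Nat.zero_le _))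
            have hmul := totalDegree_mul M (Q' j)
            rw [hSb]
            omega
        · simp only [if_neg hjk, add_zero]
          rcases hQ'deg j with h | h
          · left; rw [h, mul_zero]
          · right
            have := totalDegree_mul M (Q' j)
            rw [hSb]
            omega
      · have hprod : (∏ i, X i ^ (∑ j, A i j * x j) : MvPolynomial (Fin m) ℝ)
            = M * ∏ i, X i ^ (∑ j, A i j * x' j) := by
          rw [hMdef, ← Finset.prod_mul_distrib]
          exact Finset.prod_congr rfl fun i _ => by rw [hb i, pow_add]
        rw [hprod]
        have hsplit : ∑ j, (M * Q' j + if j = k then 1 else 0) * ((∏ i, X i ^ A i j) - 1)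
            = M * (∑ j, Q' j * ((∏ i, X i ^ A i j) - 1)) + (M - 1) := by
          have hterm : ∀ j ∈ Finset.univ, (M * Q' j + if j = k then 1 else 0) * ((∏ i, X i ^ A i j) - 1)
              = M * (Q' j * ((∏ i, X i ^ A i j) - 1))
                + (if j = k then ((∏ i, X i ^ A i j) - 1) else 0) := by
            intro j _
            split <;> ring
          rw [Finset.sum_congr rfl hterm, Finset.sum_add_distrib,
            Finset.sum_ite_eq' Finset.univ k, if_pos (Finset.mem_univ k), ← Finset.mul_sum]
        rw [hsplit, ← hQ'eq]
        ring

theorem discrete_farkas_degree_bound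
    (m n : ℕ) (A : Matrix (Fin m) (Fin n) ℕ) (b : Fin m → ℕ)
    (x : Fin n → ℕ) (hx : ∀ i, ∑ j, A i j * x j = b i) :
    ∃ Q : Fin n → MvPolynomial (Fin m) ℝ,
      (∀ j d, 0 ≤ (Q j).coeff d) ∧
      (∀ j, (Q j).totalDegree ≤ (∑ i, b i) - ⨅ k, ∑ i, A i k) ∧
      (∏ i, X i ^ b i : MvPolynomial (Fin m) ℝ) - 1 =
        ∑ j, Q j * ((∏ i, X i ^ A i j) - 1) := by
  obtain ⟨Q, hpos, hdeg, heq⟩ := discrete_farkas_aux A (∑ j, x j) x le_rfl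
  refine ⟨Q, hpos, ?_, ?_⟩
  · intro j
    rcases hdeg j with h | h
    · rw [h, totalDegree_zero]; exact Nat.zero_le _
    · have hs : ∑ i, ∑ j, A i j * x j = ∑ i, b i :=
        Finset.sum_congr rfl fun i _ => hx i
      rw [hs] at h
      omega
  · have hp : (∏ i, X i ^ b i : MvPolynomial (Fin m) ℝ)
        = ∏ i, X i ^ (∑ j, A i j * x j) :=
      Finset.prod_congr rfl fun i _ => by rw [hx i]
    rw [hp, heq]
end

section
/- Let A ∈ ℕ^{m×n}, b ∈ ℕ^m, and suppose z^b - 1 = ∑_{j=1}^n Q_j(z)(z^{A_j} - 1) for polynomials Q_j ∈ ℝ[z_1,…,z_m] with nonnegative coefficients. Then for every λ ∈ ℝ^m with A'λ ≥ 0 (componentwise, where A' is the transpose of A), one has b'λ ≥ 0. -/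
open MvPolynomial

theorem discrete_farkas_implies_classical
    (m n : ℕ) (A : Matrix (Fin m) (Fin n) ℕ) (b : Fin m → ℕ)
    (Q : Fin n → MvPolynomial (Fin m) ℝ)
    (hQ : ∀ j d, 0 ≤ (Q j).coeff d)
    (h : (∏ i, X i ^ b i : MvPolynomial (Fin m) ℝ) - 1 =
        ∑ j, Q j * ((∏ i, X i ^ A i j) - 1))
    (lam : Fin m → ℝ) (hlam : ∀ j, 0 ≤ ∑ i, (A i j : ℝ) * lam i) :
    0 ≤ ∑ i, (b i : ℝ) * lam i := by
  set f : Fin m → ℝ := fun i => Real.exp (lam i) with hf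
  have hfpos : ∀ i, 0 < f i := fun i => Real.exp_pos _
  have heval : ∀ (c : Fin m → ℕ),
      eval f (∏ i, X i ^ c i : MvPolynomial (Fin m) ℝ)
        = Real.exp (∑ i, (c i : ℝ) * lam i) := by
    intro c
    simp only [map_prod, map_pow, eval_X, hf]
    rw [Real.exp_sum]
    refine Finset.prod_congr rfl fun i _ => ?_
    rw [← Real.exp_nat_mul]
  have hQnn : ∀ j, 0 ≤ eval f (Q j) := by
    intro j
    rw [eval_eq]
    refine Finset.sum_nonneg fun d _ => mul_nonneg (hQ j d) ?_
    exact Finset.prod_nonneg fun i _ => pow_nonneg (hfpos i).le _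
  have h2 := congrArg (eval f) h
  simp only [map_sub, map_sum, map_mul, map_one, heval] at h2
  have key : (0:ℝ) ≤ Real.exp (∑ i, (b i : ℝ) * lam i) - 1 := by
    rw [h2]
    refine Finset.sum_nonneg fun j _ => mul_nonneg (hQnn j) ?_
    have := Real.one_le_exp (hlam j)
    linarith
  have : (1:ℝ) ≤ Real.exp (∑ i, (b i : ℝ) * lam i) := by linarith
  exact (Real.one_le_exp_iff ..).mp this
end

section
/- Let A ∈ ℤ^{m×n}, b ∈ ℤ^m with Ω := {x ∈ ℝ^n : Ax = b, x ≥ 0} compact, and let α ∈ ℕ^n, β ∈ ℕ satisfy A_{jk} + α_k ≥ 0 for all j,k, b_j + β ≥ 0 for all j, and β ≥ max{∑_j α_j x_j : x ∈ Ω}. Then Ax = b has a solution x ∈ ℕ^n if and only if the polynomial z^b (zy)^β - 1 ∈ ℝ[z_1,…,z_m,y] can be written as Q_0(z,y)(z_1···z_m·y - 1) + ∑_{j=1}^n Q_j(z,y)(z^{A_j}(z_1···z_m·y)^{α_j} - 1) for polynomials Q_0,…,Q_n in ℝ[z_1,…,z_m,y] with nonnegative coefficients. -/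
open MvPolynomial Finset

-- product of monomials
lemma prod_monomial_one {σ ι : Type*} (s : Finset ι) (d : ι → (σ →₀ ℕ)) :
    (∏ i ∈ s, monomial (d i) (1 : ℝ)) = monomial (∑ i ∈ s, d i) 1 := by
  classical
  induction s using Finset.induction_on with
  | empty => simp [← C_1, ← monomial_zero']
  | insert _ _ h ih => simp [Finset.prod_insert h, Finset.sum_insert h, ih, monomial_mul]

lemma prodX_form (m : ℕ) (c : Fin m → ℕ) (k : ℕ) :
    ((∏ i : Fin m, X (Fin.castSucc i) ^ c i) * X (Fin.last m) ^ k : MvPolynomial (Fin (m+1)) ℝ)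
      = monomial ((∑ i : Fin m, Finsupp.single i.castSucc (c i)) + Finsupp.single (Fin.last m) k) 1 := by
  simp only [X_pow_eq_monomial]
  rw [prod_monomial_one, monomial_mul, mul_one]

lemma app_last (m : ℕ) (c : Fin m → ℕ) (k : ℕ) :
    ((∑ i : Fin m, Finsupp.single i.castSucc (c i)) + Finsupp.single (Fin.last m) k) (Fin.last m) = k := by
  simp [Finsupp.finset_sum_apply, Finsupp.single_apply, (Fin.castSucc_lt_last _).ne]

lemma app_cast (m : ℕ) (c : Fin m → ℕ) (k : ℕ) (i : Fin m) :
    ((∑ i : Fin m, Finsupp.single i.castSucc (c i)) + Finsupp.single (Fin.last m) k) i.castSucc = c i := by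
  simp [Finsupp.finset_sum_apply, Finsupp.single_apply, ((Fin.castSucc_lt_last i).ne).symm, Fin.castSucc_inj]

lemma coeff_mul_nonneg {σ : Type*} (p q : MvPolynomial σ ℝ)
    (hp : ∀ d, 0 ≤ p.coeff d) (hq : ∀ d, 0 ≤ q.coeff d) :
    ∀ d, 0 ≤ (p * q).coeff d := by
  classical
  intro d
  rw [coeff_mul]
  exact Finset.sum_nonneg fun x _ => mul_nonneg (hp _) (hq _)

lemma coeff_monomial_nonneg {σ : Type*} (d e : σ →₀ ℕ) (c : ℝ) (hc : 0 ≤ c) :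
    0 ≤ (monomial d c).coeff e := by
  classical
  rw [coeff_monomial]; split <;> simp [hc]

-- forward core
lemma farkas_forward_core {σ : Type*} :
    ∀ (N : ℕ) (e : Fin N → (σ →₀ ℕ)) (x : Fin N → ℕ),
    ∃ Q : Fin N → MvPolynomial σ ℝ, (∀ j d, 0 ≤ (Q j).coeff d) ∧
      (monomial (∑ j, x j • e j) (1:ℝ)) - 1 = ∑ j, Q j * (monomial (e j) 1 - 1) := by
  classical
  intro N
  induction N with
  | zero =>
      intro e x
      exact ⟨finZeroElim, fun j => j.elim0, by simp [← C_1, ← monomial_zero']⟩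
  | succ N ih =>
      intro e x
      obtain ⟨Q', hQ', hid⟩ := ih (fun j => e j.succ) (fun j => x j.succ)
      set t' : σ →₀ ℕ := ∑ j : Fin N, x j.succ • e j.succ with ht'
      set u0 : MvPolynomial σ ℝ := monomial (e 0) 1 with hu0
      refine ⟨Fin.cases (∑ i ∈ range (x 0), u0 ^ i) (fun j => monomial (x 0 • e 0) 1 * Q' j), ?_, ?_⟩
      · intro j d
        induction j using Fin.cases with
        | zero =>
            simp only [Fin.cases_zero]
            rw [coeff_sum]
            refine Finset.sum_nonneg fun i _ => ?_
            rw [hu0, monomial_pow, one_pow]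
            exact coeff_monomial_nonneg _ _ _ zero_le_one
        | succ j =>
            simp only [Fin.cases_succ]
            exact coeff_mul_nonneg _ _ (fun d => coeff_monomial_nonneg _ _ _ zero_le_one) (hQ' j) d
      · rw [Fin.sum_univ_succ, Fin.sum_univ_succ]
        simp only [Fin.cases_zero, Fin.cases_succ]
        rw [← ht']
        have h1 : (monomial (x 0 • e 0 + t') (1:ℝ))
            = monomial (x 0 • e 0) 1 * monomial t' 1 := by
          rw [monomial_mul, mul_one]
        have h2 : (monomial (x 0 • e 0) (1:ℝ)) = u0 ^ (x 0) := by
          rw [hu0, monomial_pow, one_pow]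
        have h3 : (∑ i ∈ range (x 0), u0 ^ i) * (u0 - 1) = u0 ^ (x 0) - 1 := geom_sum_mul u0 (x 0)
        have h4 : ∑ j : Fin N, (monomial (x 0 • e 0) (1:ℝ) * Q' j) * (monomial (e j.succ) 1 - 1)
            = monomial (x 0 • e 0) 1 * ((monomial t' 1) - 1) := by
          simp only [mul_assoc]
          rw [← Finset.mul_sum, ← hid]
        rw [h4, h1, ← hu0, h3, h2]
        ring

lemma farkas_backward_core {σ : Type*} (N : ℕ) (e : Fin N → (σ →₀ ℕ)) (t : σ →₀ ℕ)
    (Q : Fin N → MvPolynomial σ ℝ) (hQ : ∀ j d, 0 ≤ (Q j).coeff d)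
    (heq : (monomial t (1:ℝ)) - 1 = ∑ j, Q j * (monomial (e j) 1 - 1)) :
    ∃ x : Fin N → ℕ, t = ∑ j, x j • e j := by
  classical
  set R : Set (σ →₀ ℕ) := Set.range (fun x : Fin N → ℕ => ∑ j, x j • e j) with hR
  set w : (σ →₀ ℕ) → ℝ := fun d => if d ∈ R then 0 else 1 with hw
  -- R is closed under adding e j
  have hclosed : ∀ d ∈ R, ∀ j, d + e j ∈ R := by
    rintro d ⟨x, rfl⟩ j
    refine ⟨Function.update x j (x j + 1), ?_⟩
    simp only
    rw [Finset.sum_eq_add_sum_sdiff_singleton_of_mem (Finset.mem_univ j)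
      (fun k => Function.update x j (x j + 1) k • e k)]
    rw [Finset.sum_eq_add_sum_sdiff_singleton_of_mem (Finset.mem_univ j) (fun k => x k • e k)]
    rw [Finset.sum_congr rfl (fun k hk => by
      rw [Function.update_of_ne (by simpa using (Finset.mem_sdiff.mp hk).2)])]
    rw [Function.update_self, add_smul, one_smul]
    abel
  have h0R : (0 : σ →₀ ℕ) ∈ R := ⟨0, by simp⟩
  have hwmono : ∀ d j, w (d + e j) ≤ w d := by
    intro d j
    by_cases hd : d ∈ R
    · simp [hw, hd, hclosed d hd j]
    · have : w d = 1 := by simp [hw, hd]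
      rw [this, hw]
      dsimp only
      split <;> norm_num
  -- the linear functional
  set M : MvPolynomial σ ℝ → ℝ := fun p => ∑ d ∈ p.support, w d * p.coeff d with hM
  have hMsub : ∀ (F : Finset (σ →₀ ℕ)) (p : MvPolynomial σ ℝ), p.support ⊆ F →
      M p = ∑ d ∈ F, w d * p.coeff d := by
    intro F p h
    exact Finset.sum_subset h (fun d _ hd => by
      rw [MvPolynomial.notMem_support_iff.mp hd, mul_zero])
  have hMadd : ∀ p q, M (p + q) = M p + M q := by
    intro p q
    have h1 := hMsub (p.support ∪ q.support ∪ (p+q).support) p (by intro d hd; simp [hd])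
    have h2 := hMsub (p.support ∪ q.support ∪ (p+q).support) q (by intro d hd; simp [hd])
    have h3 := hMsub (p.support ∪ q.support ∪ (p+q).support) (p+q) (by intro d hd; simp [hd])
    rw [h1, h2, h3, ← Finset.sum_add_distrib]
    apply Finset.sum_congr rfl
    intro d _
    rw [coeff_add]; ring
  let Mh : MvPolynomial σ ℝ →+ ℝ := ⟨⟨M, by simp [hM]⟩, hMadd⟩
  have hMmono : ∀ (d : σ →₀ ℕ) (c : ℝ), Mh (monomial d c) = w d * c := by
    intro d c
    by_cases hc : c = 0
    · simp [hc, Mh, hM]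
    · show M _ = _
      rw [hM]
      simp only
      rw [support_monomial, if_neg hc, Finset.sum_singleton, coeff_monomial, if_pos rfl]
  have hkey : ∀ (q : MvPolynomial σ ℝ) (j : Fin N), (∀ d, 0 ≤ q.coeff d) →
      Mh (q * (monomial (e j) 1 - 1)) ≤ 0 := by
    intro q j hq
    conv_lhs => rw [q.as_sum, Finset.sum_mul, map_sum]
    apply Finset.sum_nonpos
    intro d _
    rw [mul_sub, mul_one, monomial_mul, mul_one, map_sub, hMmono, hMmono]
    have := hwmono d j
    nlinarith [hq d]
  have hMheq := congrArg Mh heq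
  rw [map_sub, map_sum] at hMheq
  have hM1 : Mh 1 = 0 := by
    rw [show (1 : MvPolynomial σ ℝ) = monomial 0 1 by simp [← C_1, ← monomial_zero'], hMmono]
    simp [hw, h0R]
  have hle : w t ≤ 0 := by
    rw [hMmono t 1, hM1, sub_zero] at hMheq
    rw [mul_one] at hMheq
    rw [hMheq]
    exact Finset.sum_nonpos fun j _ => hkey (Q j) j (hQ j)
  by_contra hcon
  have htR : t ∉ R := by
    intro h
    exact hcon (by obtain ⟨x, hx⟩ := h; exact ⟨x, hx.symm⟩)
  rw [hw] at hle
  simp only [htR, if_false] at hle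
  linarith

theorem discrete_farkas_general
    (m n : ℕ) (A : Matrix (Fin m) (Fin n) ℤ) (b : Fin m → ℤ)
    (hΩ : IsCompact {x : Fin n → ℝ | (∀ j, 0 ≤ x j) ∧
      ∀ i, ∑ j, (A i j : ℝ) * x j = b i})
    (α : Fin n → ℕ) (β : ℕ)
    (hA : ∀ i k, 0 ≤ A i k + (α k : ℤ))
    (hb : ∀ i, 0 ≤ b i + (β : ℤ))
    (hβ : ∀ x : Fin n → ℝ, (∀ j, 0 ≤ x j) →
      (∀ i, ∑ j, (A i j : ℝ) * x j = b i) →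
      ∑ j, (α j : ℝ) * x j ≤ (β : ℝ)) :
    (∃ x : Fin n → ℕ, ∀ i, ∑ j, A i j * (x j : ℤ) = b i) ↔
    (∃ Q : Fin (n + 1) → MvPolynomial (Fin (m + 1)) ℝ,
      (∀ j d, 0 ≤ (Q j).coeff d) ∧
      (∏ i : Fin m, X i.castSucc ^ (b i + (β : ℤ)).toNat) *
          X (Fin.last m) ^ β - 1 =
        Q 0 * ((∏ i : Fin m, X i.castSucc) * X (Fin.last m) - 1) +
        ∑ j : Fin n, Q j.succ *
          ((∏ i : Fin m, X i.castSucc ^ (A i j + (α j : ℤ)).toNat) *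
            X (Fin.last m) ^ α j - 1)) := by
  classical
  set e0 : Fin (m+1) →₀ ℕ :=
    (∑ i : Fin m, Finsupp.single i.castSucc 1) + Finsupp.single (Fin.last m) 1 with he0
  set eS : Fin n → (Fin (m+1) →₀ ℕ) := fun j =>
    (∑ i : Fin m, Finsupp.single i.castSucc (A i j + (α j : ℤ)).toNat)
      + Finsupp.single (Fin.last m) (α j) with heS
  set tt : Fin (m+1) →₀ ℕ :=
    (∑ i : Fin m, Finsupp.single i.castSucc (b i + (β : ℤ)).toNat)
      + Finsupp.single (Fin.last m) β with htt
  set ee : Fin (n+1) → (Fin (m+1) →₀ ℕ) := Fin.cases e0 eS with hee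
  have hprod0 : ((∏ i : Fin m, X i.castSucc) * X (Fin.last m) : MvPolynomial (Fin (m+1)) ℝ)
      = monomial e0 1 := by
    simpa using prodX_form m (fun _ => 1) 1
  have hprodt : ((∏ i : Fin m, X i.castSucc ^ (b i + (β : ℤ)).toNat) *
      X (Fin.last m) ^ β : MvPolynomial (Fin (m+1)) ℝ) = monomial tt 1 :=
    prodX_form m _ β
  have hprodj : ∀ j : Fin n, ((∏ i : Fin m, X i.castSucc ^ (A i j + (α j : ℤ)).toNat) *
      X (Fin.last m) ^ α j : MvPolynomial (Fin (m+1)) ℝ) = monomial (eS j) 1 :=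
    fun j => prodX_form m _ (α j)
  -- apply lemmas
  have he0last : e0 (Fin.last m) = 1 := app_last m (fun _ => 1) 1
  have he0cast : ∀ i : Fin m, e0 i.castSucc = 1 := fun i => app_cast m (fun _ => 1) 1 i
  have heSlast : ∀ j, eS j (Fin.last m) = α j := fun j => app_last m _ (α j)
  have heScast : ∀ j i, eS j i.castSucc = (A i j + (α j : ℤ)).toNat :=
    fun j i => app_cast m _ (α j) i
  have httlast : tt (Fin.last m) = β := app_last m _ β
  have httcast : ∀ i, tt i.castSucc = (b i + (β : ℤ)).toNat := fun i => app_cast m _ β i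
  have splitsum : ∀ (y : Fin n → ℕ) (i : Fin m),
      (∑ j, (y j : ℤ) * (A i j + (α j : ℤ))) =
        (∑ j, A i j * (y j : ℤ)) + (∑ j, (y j : ℤ) * (α j : ℤ)) := by
    intro y i
    rw [← Finset.sum_add_distrib]
    exact Finset.sum_congr rfl fun j _ => by ring
  have castsum : ∀ (y : Fin n → ℕ) (i : Fin m),
      ((∑ j, y j * (A i j + (α j : ℤ)).toNat : ℕ) : ℤ) =
        ∑ j, (y j : ℤ) * (A i j + (α j : ℤ)) := by
    intro y i
    rw [Nat.cast_sum]
    exact Finset.sum_congr rfl fun j _ => by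
      rw [Nat.cast_mul, Int.toNat_of_nonneg (hA i j)]
  constructor
  · rintro ⟨x, hx⟩
    have hxR : ∀ i, ∑ j, (A i j : ℝ) * (x j : ℝ) = (b i : ℝ) := by
      intro i
      have h := hx i
      calc ∑ j, (A i j : ℝ) * (x j : ℝ)
          = ((∑ j, A i j * (x j : ℤ) : ℤ) : ℝ) := by push_cast; ring
        _ = (b i : ℝ) := by rw [h]
    have hs : (∑ j, α j * x j) ≤ β := by
      have h := hβ (fun j => (x j : ℝ)) (fun j => by positivity) hxR
      have : ((∑ j, α j * x j : ℕ) : ℝ) ≤ (β : ℝ) := by push_cast; push_cast at h; linarith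
      exact_mod_cast this
    set s : ℕ := ∑ j, α j * x j with hsdef
    set xx : Fin (n+1) → ℕ := Fin.cases (β - s) x with hxx
    have hT : tt = ∑ j, xx j • ee j := by
      ext a
      rw [Finsupp.finset_sum_apply]
      simp only [Finsupp.smul_apply, smul_eq_mul]
      rw [Fin.sum_univ_succ]
      simp only [hxx, hee, Fin.cases_zero, Fin.cases_succ]
      induction a using Fin.lastCases with
      | last =>
          rw [httlast, he0last, mul_one]
          have : ∑ j, x j * eS j (Fin.last m) = s := by
            rw [hsdef]
            exact Finset.sum_congr rfl fun j _ => by rw [heSlast, Nat.mul_comm]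
          rw [this]
          omega
      | cast i =>
          rw [httcast, he0cast, mul_one]
          have hsum : ∑ j, x j * eS j i.castSucc = ∑ j, x j * (A i j + (α j : ℤ)).toNat :=
            Finset.sum_congr rfl fun j _ => by rw [heScast]
          rw [hsum]
          have hZ : ((b i + (β : ℤ)).toNat : ℤ) =
              ((β - s + ∑ j, x j * (A i j + (α j : ℤ)).toNat : ℕ) : ℤ) := by
            rw [Int.toNat_of_nonneg (hb i)]
            push_cast [castsum x i]
            rw [splitsum x i]
            have h1 : (∑ j, A i j * (x j : ℤ)) = b i := hx i
            have h2 : (∑ j, (x j : ℤ) * (α j : ℤ)) = (s : ℤ) := by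
              rw [hsdef]; push_cast
              exact Finset.sum_congr rfl fun j _ => by ring
            have h3 : ((β - s : ℕ) : ℤ) = (β : ℤ) - s := by
              have : s ≤ β := hs
              omega
            rw [h1, h2, h3]
            ring
          exact_mod_cast hZ
    obtain ⟨Q, hQ, hid⟩ := farkas_forward_core (n+1) ee xx
    refine ⟨Q, hQ, ?_⟩
    rw [hprodt, hprod0]
    rw [Finset.sum_congr rfl fun j (_ : j ∈ univ) => by rw [hprodj j]]
    rw [← hT] at hid
    rw [hid, Fin.sum_univ_succ]
    simp only [hee, Fin.cases_zero, Fin.cases_succ]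
  · rintro ⟨Q, hQ, heq⟩
    rw [hprodt, hprod0] at heq
    rw [Finset.sum_congr rfl fun j (_ : j ∈ univ) => by rw [hprodj j]] at heq
    have heq' : (monomial tt (1:ℝ)) - 1 = ∑ j : Fin (n+1), Q j * (monomial (ee j) 1 - 1) := by
      rw [Fin.sum_univ_succ]
      simp only [hee, Fin.cases_zero, Fin.cases_succ]
      exact heq
    obtain ⟨x', hx'⟩ := farkas_backward_core (n+1) ee tt Q hQ heq'
    refine ⟨fun j => x' j.succ, ?_⟩
    have happ : ∀ a, tt a = ∑ j : Fin (n+1), x' j * (ee j a) := by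
      intro a
      rw [hx', Finsupp.finset_sum_apply]
      simp [Finsupp.smul_apply]
    have hlast : β = x' 0 + ∑ j, x' j.succ * α j := by
      have := happ (Fin.last m)
      rw [httlast, Fin.sum_univ_succ] at this
      simp only [hee, Fin.cases_zero, Fin.cases_succ] at this
      rw [he0last, mul_one] at this
      rw [Finset.sum_congr rfl (fun j (_ : j ∈ univ) => by rw [heSlast j])] at this
      exact this
    intro i
    have hcast : (b i + (β : ℤ)).toNat = x' 0 + ∑ j, x' j.succ * (A i j + (α j : ℤ)).toNat := by
      have := happ i.castSucc
      rw [httcast, Fin.sum_univ_succ] at this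
      simp only [hee, Fin.cases_zero, Fin.cases_succ] at this
      rw [he0cast, mul_one] at this
      rw [Finset.sum_congr rfl (fun j (_ : j ∈ univ) => by rw [heScast j i])] at this
      exact this
    have hZ : b i + (β : ℤ) = (x' 0 : ℤ) + ∑ j, (x' j.succ : ℤ) * (A i j + (α j : ℤ)) := by
      have := congrArg (fun k : ℕ => (k : ℤ)) hcast
      simpa [Int.toNat_of_nonneg (hb i), castsum (fun j => x' j.succ) i] using this
    rw [splitsum (fun j => x' j.succ) i] at hZ
    have hlZ : (β : ℤ) = (x' 0 : ℤ) + ∑ j, (x' j.succ : ℤ) * (α j : ℤ) := by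
      have := congrArg (fun k : ℕ => (k : ℤ)) hlast
      push_cast at this
      exact this
    linarith [hZ, hlZ]
end

section
/- Let A ∈ ℕ^{m×n} with all columns nonzero and b ∈ ℕ^m. Suppose z^b - 1 = ∑_{j=1}^n Q_j(z)(z^{A_j} - 1) with each Q_j having nonnegative coefficients. Then the number of solutions x ∈ ℕ^n of Ax = b equals 1 + ∑_{j=1}^n ∑_{α} Q_{jα} · N_j(A_j + α), where Q_{jα} is the coefficient of z^α in Q_j and N_j(c) denotes the number of solutions y ∈ ℕ^{n-1} of Â^{(j)} y = c, with Â^{(j)} the matrix obtained from A by deleting its j-th column. -/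
open MvPolynomial

section CountingAux

variable {m n : ℕ}

/-- The linear functional sending a polynomial `P` to `∑_v P_v N(v)`. -/
private noncomputable def Lam (N : (Fin m →₀ ℕ) → ℝ) (P : MvPolynomial (Fin m) ℝ) : ℝ :=
  ∑ v ∈ P.support, P.coeff v * N v

private lemma Lam_eq_sum (N : (Fin m →₀ ℕ) → ℝ) (P : MvPolynomial (Fin m) ℝ)
    (S : Finset (Fin m →₀ ℕ)) (hS : P.support ⊆ S) :
    Lam N P = ∑ v ∈ S, P.coeff v * N v := by
  unfold Lam
  refine Finset.sum_subset hS fun v _ hv => ?_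
  rw [MvPolynomial.notMem_support_iff.mp hv, zero_mul]

private lemma Lam_add (N : (Fin m →₀ ℕ) → ℝ) (P R : MvPolynomial (Fin m) ℝ) :
    Lam N (P + R) = Lam N P + Lam N R := by
  classical
  set S := (P + R).support ∪ P.support ∪ R.support with hSdef
  rw [Lam_eq_sum N (P + R) S (by intro v hv; simp [S, hv]),
    Lam_eq_sum N P S (by intro v hv; simp [S, hv]),
    Lam_eq_sum N R S (by intro v hv; simp [S, hv]), ← Finset.sum_add_distrib]
  refine Finset.sum_congr rfl fun v _ => ?_
  rw [MvPolynomial.coeff_add]; ring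

private noncomputable def LamHom (N : (Fin m →₀ ℕ) → ℝ) : MvPolynomial (Fin m) ℝ →+ ℝ :=
  AddMonoidHom.mk' (Lam N) (Lam_add N)

private lemma LamHom_monomial (N : (Fin m →₀ ℕ) → ℝ) (d : Fin m →₀ ℕ) (c : ℝ) :
    LamHom N (monomial d c) = c * N d := by
  classical
  show Lam N (monomial d c) = c * N d
  rw [Lam_eq_sum N _ {d} (MvPolynomial.support_monomial_subset), Finset.sum_singleton,
    MvPolynomial.coeff_monomial, if_pos rfl]

private lemma LamHom_mul_monomial (N : (Fin m →₀ ℕ) → ℝ) (P : MvPolynomial (Fin m) ℝ)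
    (d : Fin m →₀ ℕ) :
    LamHom N (P * monomial d 1) = ∑ α ∈ P.support, P.coeff α * N (α + d) := by
  classical
  conv_lhs => rw [P.as_sum, Finset.sum_mul]
  rw [map_sum]
  refine Finset.sum_congr rfl fun α _ => ?_
  rw [MvPolynomial.monomial_mul, mul_one, LamHom_monomial]

/-- `∏ i, X i ^ b i` as a monomial. -/
private lemma prod_X_pow (b : Fin m → ℕ) :
    (∏ i, X i ^ b i : MvPolynomial (Fin m) ℝ) =
      monomial (Finsupp.equivFunOnFinite.symm b) 1 := by
  classical
  rw [← MvPolynomial.prod_X_pow_eq_monomial]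
  refine (Finset.prod_subset (Finset.subset_univ _) ?_).symm
  intro i _ hi
  have hb0 : b i = 0 := Finsupp.notMem_support_iff.mp hi
  rw [hb0, pow_zero]

variable (A : Matrix (Fin m) (Fin n) ℕ)

private lemma sol_finite (hA : ∀ j, ∃ i, A i j ≠ 0) (v : Fin m → ℕ) :
    Finite {x : Fin n → ℕ // ∀ i, ∑ j, A i j * x j = v i} := by
  classical
  have hb : ∀ (x : Fin n → ℕ), (∀ i, ∑ j, A i j * x j = v i) → ∀ j,
      x j < Finset.univ.sup v + 1 := by
    intro x hx j
    obtain ⟨i, hi⟩ := hA j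
    have h1 : x j ≤ ∑ k, A i k * x k := by
      calc x j ≤ A i j * x j := Nat.le_mul_of_pos_left _ (Nat.pos_of_ne_zero hi)
      _ ≤ ∑ k, A i k * x k :=
        Finset.single_le_sum (f := fun k => A i k * x k) (fun k _ => Nat.zero_le _)
          (Finset.mem_univ j)
    rw [hx i] at h1
    have h2 : v i ≤ Finset.univ.sup v := Finset.le_sup (Finset.mem_univ i)
    omega
  exact Finite.of_injective
    (fun x => (fun j => (⟨x.1 j, hb x.1 x.2 j⟩ : Fin (Finset.univ.sup v + 1))))
    (by
      intro x y hxy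
      ext j
      exact congrArg Fin.val (congrFun hxy j))

private lemma sol_finite' (hA : ∀ j, ∃ i, A i j ≠ 0) (j : Fin n) (v : Fin m → ℕ) :
    Finite {y : Fin n → ℕ // y j = 0 ∧ ∀ i, ∑ k, A i k * y k = v i} := by
  have := sol_finite A hA v
  exact Finite.of_injective
    (fun y : {y : Fin n → ℕ // y j = 0 ∧ ∀ i, ∑ k, A i k * y k = v i} =>
      (⟨y.1, y.2.2⟩ : {x : Fin n → ℕ // ∀ i, ∑ k, A i k * x k = v i}))
    (by
      intro y z hyz
      have h1 : y.1 = z.1 :=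
        congrArg (fun t : {x : Fin n → ℕ // ∀ i, ∑ k, A i k * x k = v i} => t.1) hyz
      exact Subtype.ext h1)

private lemma card_zero (hA : ∀ j, ∃ i, A i j ≠ 0) :
    Nat.card {x : Fin n → ℕ // ∀ i, ∑ k, A i k * x k = 0} = 1 := by
  rw [Nat.card_eq_one_iff_unique]
  constructor
  · constructor
    intro x y
    apply Subtype.ext
    funext j
    obtain ⟨i, hi⟩ := hA j
    have hx : A i j * x.1 j = 0 := by
      have := Finset.single_le_sum (f := fun k => A i k * x.1 k)
        (fun k _ => Nat.zero_le _) (Finset.mem_univ j)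
      rw [x.2 i] at this
      exact Nat.eq_zero_of_le_zero this
    have hy : A i j * y.1 j = 0 := by
      have := Finset.single_le_sum (f := fun k => A i k * y.1 k)
        (fun k _ => Nat.zero_le _) (Finset.mem_univ j)
      rw [y.2 i] at this
      exact Nat.eq_zero_of_le_zero this
    have hx0 : x.1 j = 0 := (Nat.mul_eq_zero.mp hx).resolve_left hi
    have hy0 : y.1 j = 0 := (Nat.mul_eq_zero.mp hy).resolve_left hi
    rw [hx0, hy0]
  · exact ⟨⟨fun _ => 0, fun i => by simp⟩⟩

private lemma card_split (hA : ∀ j, ∃ i, A i j ≠ 0) (j : Fin n) (c : Fin m → ℕ) :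
    Nat.card {x : Fin n → ℕ // ∀ i, ∑ k, A i k * x k = c i + A i j} =
      Nat.card {x : Fin n → ℕ // ∀ i, ∑ k, A i k * x k = c i} +
      Nat.card {y : Fin n → ℕ // y j = 0 ∧ ∀ i, ∑ k, A i k * y k = A i j + c i} := by
  classical
  have f1 := sol_finite A hA (fun i => c i + A i j)
  have f2 := sol_finite A hA c
  have f3 := sol_finite' A hA j (fun i => A i j + c i)
  set T1 := {x : Fin n → ℕ // ∀ i, ∑ k, A i k * x k = c i + A i j}
  set T2 := {x : Fin n → ℕ // ∀ i, ∑ k, A i k * x k = c i}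
  set T3 := {y : Fin n → ℕ // y j = 0 ∧ ∀ i, ∑ k, A i k * y k = A i j + c i}
  have key : ∀ (x : Fin n → ℕ) (i : Fin m),
      ∑ k, A i k * (x k + if k = j then 1 else 0) = (∑ k, A i k * x k) + A i j := by
    intro x i
    have : ∀ k, A i k * (x k + if k = j then 1 else 0)
        = A i k * x k + (if k = j then A i j else 0) := by
      intro k
      by_cases hk : k = j <;> simp [hk, Nat.mul_add]
    rw [Finset.sum_congr rfl (fun k _ => this k), Finset.sum_add_distrib,
      Finset.sum_ite_eq' Finset.univ j (fun _ => A i j), if_pos (Finset.mem_univ j)]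
  let f : T2 ⊕ T3 → T1 := fun z =>
    match z with
    | Sum.inl x => ⟨fun k => x.1 k + if k = j then 1 else 0, by
        intro i
        rw [key x.1 i, x.2 i]⟩
    | Sum.inr y => ⟨y.1, fun i => by rw [y.2.2 i, Nat.add_comm]⟩
  have hinj : Function.Injective f := by
    rintro (x | y) (x' | y') hz
    · refine congrArg Sum.inl (Subtype.ext (funext fun k => ?_))
      have h1 : (x.1 k + if k = j then 1 else 0) = (x'.1 k + if k = j then 1 else 0) :=
        congrFun (congrArg Subtype.val hz) k
      omega
    · exfalso
      have h1 : (x.1 j + if j = j then 1 else 0) = y'.1 j :=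
        congrFun (congrArg Subtype.val hz) j
      rw [y'.2.1, if_pos rfl] at h1
      omega
    · exfalso
      have h1 : y.1 j = (x'.1 j + if j = j then 1 else 0) :=
        congrFun (congrArg Subtype.val hz) j
      rw [y.2.1, if_pos rfl] at h1
      omega
    · have h1 : y.1 = y'.1 := congrArg (fun t : T1 => t.1) hz
      exact congrArg Sum.inr (Subtype.ext h1)
  have hsurj : Function.Surjective f := by
    intro z
    by_cases hz : z.1 j = 0
    · exact ⟨Sum.inr ⟨z.1, hz, fun i => by rw [z.2 i]; exact Nat.add_comm _ _⟩, Subtype.ext rfl⟩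
    · have hz1 : 1 ≤ z.1 j := Nat.pos_of_ne_zero hz
      set x : Fin n → ℕ := fun k => z.1 k - if k = j then 1 else 0 with hxdef
      have hxz : ∀ k, x k + (if k = j then 1 else 0) = z.1 k := by
        intro k
        by_cases hk : k = j <;> simp [hxdef, hk] <;> omega
      have hx2 : ∀ i, ∑ k, A i k * x k = c i := by
        intro i
        have h1 : ∑ k, A i k * (x k + if k = j then 1 else 0) = c i + A i j := by
          rw [Finset.sum_congr rfl (fun k _ => by rw [hxz k])]
          exact z.2 i
        rw [key x i] at h1
        omega
      refine ⟨Sum.inl ⟨x, hx2⟩, Subtype.ext (funext fun k => ?_)⟩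
      exact hxz k
  rw [← Nat.card_eq_of_bijective f ⟨hinj, hsurj⟩, Nat.card_sum]

end CountingAux

theorem counting_formula
    (m n : ℕ) (A : Matrix (Fin m) (Fin n) ℕ)
    (hA : ∀ j, ∃ i, A i j ≠ 0) (b : Fin m → ℕ)
    (Q : Fin n → MvPolynomial (Fin m) ℝ)
    (hQ : ∀ j d, 0 ≤ (Q j).coeff d)
    (h : (∏ i, X i ^ b i : MvPolynomial (Fin m) ℝ) - 1 =
        ∑ j, Q j * ((∏ i, X i ^ A i j) - 1)) :
    (Nat.card {x : Fin n → ℕ // ∀ i, ∑ j, A i j * x j = b i} : ℝ) =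
      1 + ∑ j, ∑ α ∈ (Q j).support, (Q j).coeff α *
        (Nat.card {y : Fin n → ℕ // y j = 0 ∧
          ∀ i, ∑ k, A i k * y k = A i j + α i} : ℝ) := by
  classical
  -- the counting function
  set N : (Fin m →₀ ℕ) → ℝ := fun v =>
    (Nat.card {x : Fin n → ℕ // ∀ i, ∑ j, A i j * x j = v i} : ℝ) with hN
  have H := congrArg (LamHom N) h
  -- compute the left-hand side
  have hone : (1 : MvPolynomial (Fin m) ℝ) = monomial 0 1 := by
    rw [MvPolynomial.monomial_zero']; simp
  have hLHS : LamHom N ((∏ i, X i ^ b i : MvPolynomial (Fin m) ℝ) - 1) =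
      N (Finsupp.equivFunOnFinite.symm b) - N 0 := by
    rw [map_sub, prod_X_pow, hone, LamHom_monomial, LamHom_monomial, one_mul, one_mul]
  -- compute each term of the right-hand side
  have hRHS : ∀ j, LamHom N (Q j * ((∏ i, X i ^ A i j) - 1)) =
      ∑ α ∈ (Q j).support, (Q j).coeff α *
        (Nat.card {y : Fin n → ℕ // y j = 0 ∧
          ∀ i, ∑ k, A i k * y k = A i j + α i} : ℝ) := by
    intro j
    rw [mul_sub, mul_one, map_sub, prod_X_pow, LamHom_mul_monomial]
    have hQsum : LamHom N (Q j) = ∑ α ∈ (Q j).support, (Q j).coeff α * N α := rfl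
    rw [hQsum, ← Finset.sum_sub_distrib]
    refine Finset.sum_congr rfl fun α hα => ?_
    rw [← mul_sub]
    congr 1
    have hco : ⇑(α + Finsupp.equivFunOnFinite.symm (fun i => A i j)) =
        fun i => α i + A i j := by
      funext i; simp
    have hsplit := card_split A hA j (fun i => α i)
    have h1 : N (α + Finsupp.equivFunOnFinite.symm fun i => A i j) =
        (Nat.card {x : Fin n → ℕ // ∀ i, ∑ k, A i k * x k = α i + A i j} : ℝ) := by
      simp only [hN, hco]
    have h2 : N α = (Nat.card {x : Fin n → ℕ // ∀ i, ∑ k, A i k * x k = α i} : ℝ) := rfl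
    rw [h1, h2, hsplit]
    push_cast
    ring
  rw [map_sum, hLHS, Finset.sum_congr rfl (fun j _ => hRHS j)] at H
  have hN0 : N 0 = 1 := by
    have he : N 0 = (Nat.card {x : Fin n → ℕ // ∀ i, ∑ k, A i k * x k = 0} : ℝ) := by
      simp only [hN, Finsupp.coe_zero, Pi.zero_apply]
    rw [he, card_zero A hA]
    norm_num
  have hNb : N (Finsupp.equivFunOnFinite.symm b) =
      (Nat.card {x : Fin n → ℕ // ∀ i, ∑ j, A i j * x j = b i} : ℝ) := by
    simp only [hN, Finsupp.coe_equivFunOnFinite_symm]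
  rw [hN0, hNb] at H
  linarith [H]
end

section
/- Let A ∈ ℕ^{m×n} and b ∈ ℕ^m. The system Ax = b has a solution x ∈ ℕ^n if and only if a certain explicit linear program is feasible: namely, there exist nonnegative reals (y_{jα}), indexed by j = 1,…,n and multi-indices α ∈ ℕ^m with |α| ≤ b* := ∑_i b_i - min_k ∑_i A_{ik}, such that for every monomial z^γ, the coefficient of z^γ in ∑_{j=1}^n (∑_α y_{jα} z^α)(z^{A_j} - 1) equals the coefficient of z^γ in z^b - 1. -/
open MvPolynomial

namespace DiscreteFarkasAux

variable {m n : ℕ}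

/-- The `j`-th column of `A` as a finitely supported function. -/
noncomputable def col (A : Matrix (Fin m) (Fin n) ℕ) (j : Fin n) : Fin m →₀ ℕ :=
  Finsupp.equivFunOnFinite.symm (fun i => A i j)

lemma col_apply (A : Matrix (Fin m) (Fin n) ℕ) (j : Fin n) (i : Fin m) :
    col A j i = A i j := rfl

lemma prod_pow (f : Fin m → ℕ) :
    (∏ i, (X i : MvPolynomial (Fin m) ℝ) ^ f i) =
      monomial (Finsupp.equivFunOnFinite.symm f) 1 := by
  rw [monomial_eq, C_1, one_mul, Finsupp.prod_fintype]
  · rfl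
  · intro i; rw [pow_zero]

lemma forward (A : Matrix (Fin m) (Fin n) ℕ) :
    ∀ N (x : Fin n → ℕ), (∑ j, x j) ≤ N →
    ∃ Q : Fin n → MvPolynomial (Fin m) ℝ,
      (∀ j d, 0 ≤ (Q j).coeff d) ∧
      (∀ j, ∀ α ∈ (Q j).support, α + col A j ≤ ∑ k, x k • col A k) ∧
      ∑ j, Q j * (monomial (col A j) 1 - 1) =
        monomial (∑ k, x k • col A k) (1 : ℝ) - 1 := by
  intro N
  induction N with
  | zero =>
    intro x hx
    have hx0 : ∀ j, x j = 0 := by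
      intro j
      have := Finset.single_le_sum (f := x) (fun k _ => Nat.zero_le _) (Finset.mem_univ j)
      omega
    refine ⟨0, by simp, by simp, ?_⟩
    have : (∑ k, x k • col A k) = 0 := by
      simp [hx0]
    simp [this]
  | succ N ih =>
    intro x hx
    by_cases h0 : ∀ j, x j = 0
    · refine ⟨0, by simp, by simp, ?_⟩
      have : (∑ k, x k • col A k) = 0 := by simp [h0]
      simp [this]
    · push_neg at h0
      obtain ⟨j, hj⟩ := h0
      set x' : Fin n → ℕ := Function.update x j (x j - 1) with hx'def
      have hx'sum : ∑ k, x' k ≤ N := by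
        have h1 : ∑ k, x' k + 1 = ∑ k, x k := by
          rw [Finset.sum_update_of_mem (Finset.mem_univ j),
            ← Finset.sum_erase_add _ _ (Finset.mem_univ j)]
          have : Finset.univ.erase j = Finset.univ \ {j} := by
            ext k; simp [Finset.mem_sdiff, and_comm]
          rw [this]
          omega
        omega
      obtain ⟨Q', hpos', hsupp', heq'⟩ := ih x' hx'sum
      have hb : (∑ k, x k • col A k) = col A j + ∑ k, x' k • col A k := by
        have hterm : ∀ k, x k • col A k =
            x' k • col A k + (if k = j then col A j else 0) := by
          intro k
          by_cases hk : k = j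
          · subst hk
            have hxk : x k = (x k - 1) + 1 := by omega
            simp only [hx'def, Function.update_self]
            conv_lhs => rw [hxk]
            rw [add_smul, one_smul]
            simp
          · simp [hx'def, Function.update_of_ne hk, hk]
        rw [Finset.sum_congr rfl (fun k _ => hterm k), Finset.sum_add_distrib,
          Finset.sum_ite_eq' Finset.univ j (fun _ => col A j)]
        simp [add_comm]
      classical
      refine ⟨fun k => monomial (col A j) (1 : ℝ) * Q' k + if k = j then 1 else 0,
        ?_, ?_, ?_⟩
      · intro k d
        rw [coeff_add, coeff_monomial_mul']
        apply add_nonneg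
        · split_ifs with h
          · rw [one_mul]; exact hpos' k _
          · exact le_rfl
        · split_ifs with h
          · rw [coeff_one]
            split_ifs <;> norm_num
          · simp
      · intro k α hα
        rw [mem_support_iff, coeff_add, coeff_monomial_mul'] at hα
        rw [hb]
        by_cases hle : col A j ≤ α
        · rw [if_pos hle, one_mul] at hα
          by_cases hc : (Q' k).coeff (α - col A j) = 0
          · -- then the second summand is nonzero, so k = j and α = 0
            rw [hc, zero_add] at hα
            have hkj : k = j := by
              by_contra hkj
              rw [if_neg hkj] at hα
              simp at hα
            rw [if_pos hkj, coeff_one] at hα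
            have hα0 : α = 0 := by
              by_contra h
              rw [if_neg (fun hh => h hh.symm)] at hα
              exact hα rfl
            subst hα0; subst hkj
            rw [zero_add]
            exact le_self_add
          · have hmem : α - col A j ∈ (Q' k).support := mem_support_iff.mpr hc
            have := hsupp' k _ hmem
            calc α + col A k = col A j + ((α - col A j) + col A k) := by
                  rw [← add_assoc, add_comm (col A j), tsub_add_cancel_of_le hle]
              _ ≤ col A j + ∑ k, x' k • col A k := add_le_add (le_refl _) this
        · rw [if_neg hle, zero_add] at hα
          have hkj : k = j := by
            by_contra hkj
            rw [if_neg hkj] at hα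
            simp at hα
          rw [if_pos hkj, coeff_one] at hα
          have hα0 : α = 0 := by
            by_contra h
            rw [if_neg (fun hh => h hh.symm)] at hα
            exact hα rfl
          subst hα0; subst hkj
          rw [zero_add]
          exact le_self_add
      · have expand : ∀ k : Fin n,
            (monomial (col A j) (1 : ℝ) * Q' k + if k = j then 1 else 0) *
              (monomial (col A k) 1 - 1) =
            monomial (col A j) (1 : ℝ) * (Q' k * (monomial (col A k) 1 - 1)) +
              (if k = j then monomial (col A k) (1 : ℝ) - 1 else 0) := by
          intro k
          rw [add_mul, mul_assoc, ite_mul, one_mul, zero_mul]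
        rw [Finset.sum_congr rfl (fun k _ => expand k), Finset.sum_add_distrib,
          ← Finset.mul_sum, heq',
          Finset.sum_ite_eq' Finset.univ j (fun k => monomial (col A k) (1 : ℝ) - 1),
          if_pos (Finset.mem_univ j), mul_sub, mul_one, monomial_mul, one_mul, hb]
        abel

lemma backward (A : Matrix (Fin m) (Fin n) ℕ) (bF : Fin m →₀ ℕ)
    (Q : Fin n → MvPolynomial (Fin m) ℝ)
    (hpos : ∀ j d, 0 ≤ (Q j).coeff d)
    (heq : ∑ j, Q j * (monomial (col A j) 1 - 1) = monomial bF (1 : ℝ) - 1) :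
    ∃ x : Fin n → ℕ, ∀ i, ∑ j, A i j * x j = bF i := by
  classical
  set r : (Fin m →₀ ℕ) → (Fin m →₀ ℕ) → Prop :=
    fun α β => ∃ j, (Q j).coeff α ≠ 0 ∧ β = α + col A j with hr
  -- from reachability we get a solution
  have extract : ∀ β : Fin m →₀ ℕ, Relation.ReflTransGen r 0 β →
      ∃ x : Fin n → ℕ, ∀ i, ∑ j, A i j * x j = β i := by
    intro β h
    induction h with
    | refl => exact ⟨0, by simp⟩
    | tail hab hstep ih =>
      obtain ⟨x, hx⟩ := ih
      obtain ⟨j, hj, rfl⟩ := hstep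
      refine ⟨fun k => x k + if k = j then 1 else 0, ?_⟩
      intro i
      simp only [mul_add, Finset.sum_add_distrib, mul_ite, mul_one, mul_zero,
        Finset.sum_ite_eq' Finset.univ j (fun k => A i k), if_pos (Finset.mem_univ j),
        hx i, Finsupp.add_apply, col_apply]
  -- it suffices to show bF is reachable
  suffices hreach : Relation.ReflTransGen r 0 bF by exact extract bF hreach
  by_contra hnb
  -- the finite universe of relevant exponents
  set U : Finset (Fin m →₀ ℕ) :=
    insert 0 (Finset.univ.biUnion fun j => (Q j).support.image (· + col A j)) with hU
  have reach_mem : ∀ γ, Relation.ReflTransGen r 0 γ → γ ∈ U := by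
    intro γ h
    induction h with
    | refl => exact Finset.mem_insert_self _ _
    | tail hab hstep ih =>
      obtain ⟨j, hj, rfl⟩ := hstep
      refine Finset.mem_insert_of_mem ?_
      exact Finset.mem_biUnion.mpr ⟨j, Finset.mem_univ j,
        Finset.mem_image.mpr ⟨_, mem_support_iff.mpr hj, rfl⟩⟩
  set T : Finset (Fin m →₀ ℕ) := U.filter (fun γ => Relation.ReflTransGen r 0 γ) with hT
  have memT : ∀ γ, γ ∈ T ↔ Relation.ReflTransGen r 0 γ := by
    intro γ
    constructor
    · intro h; exact (Finset.mem_filter.mp h).2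
    · intro h; exact Finset.mem_filter.mpr ⟨reach_mem γ h, h⟩
  have h0T : (0 : Fin m →₀ ℕ) ∈ T := (memT 0).mpr Relation.ReflTransGen.refl
  have hbT : bF ∉ T := fun h => hnb ((memT bF).mp h)
  have closure : ∀ γ ∈ T, ∀ j : Fin n, (Q j).coeff γ ≠ 0 → γ + col A j ∈ T := by
    intro γ hγ j hj
    exact (memT _).mpr (Relation.ReflTransGen.tail ((memT γ).mp hγ) ⟨j, hj, rfl⟩)
  -- conservation of flow
  have hcons : ∀ γ : Fin m →₀ ℕ,
      (∑ j, if col A j ≤ γ then (Q j).coeff (γ - col A j) else 0) -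
        (∑ j, (Q j).coeff γ) =
      (if bF = γ then (1:ℝ) else 0) - (if (0 : Fin m →₀ ℕ) = γ then 1 else 0) := by
    intro γ
    have h1 := congrArg (coeff γ) heq
    rw [coeff_sum] at h1
    have h2 : ∀ j : Fin n, coeff γ (Q j * (monomial (col A j) 1 - 1)) =
        (if col A j ≤ γ then (Q j).coeff (γ - col A j) else 0) - (Q j).coeff γ := by
      intro j
      rw [mul_sub, mul_one, coeff_sub, coeff_mul_monomial']
      split_ifs with h
      · rw [mul_one]
      · rfl
    rw [Finset.sum_congr rfl (fun j _ => h2 j), Finset.sum_sub_distrib] at h1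
    rw [h1, coeff_sub, coeff_monomial, coeff_one]
  -- summing over T
  have keysum : (∑ γ ∈ T, ∑ j, if col A j ≤ γ then (Q j).coeff (γ - col A j) else 0) -
      (∑ γ ∈ T, ∑ j, (Q j).coeff γ) = -1 := by
    rw [← Finset.sum_sub_distrib, Finset.sum_congr rfl (fun γ _ => hcons γ),
      Finset.sum_sub_distrib, Finset.sum_ite_eq T bF (fun _ => (1:ℝ)),
      Finset.sum_ite_eq T 0 (fun _ => (1:ℝ)), if_neg hbT, if_pos h0T]
    norm_num
  -- but outflow ≤ inflow
  have hle : (∑ γ ∈ T, ∑ j, (Q j).coeff γ) ≤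
      ∑ γ ∈ T, ∑ j, if col A j ≤ γ then (Q j).coeff (γ - col A j) else 0 := by
    rw [← Finset.sum_product' (f := fun γ j => (Q j).coeff γ),
      ← Finset.sum_product' (f := fun γ (j : Fin n) =>
        if col A j ≤ γ then (Q j).coeff (γ - col A j) else 0)]
    set h : (Fin m →₀ ℕ) × Fin n → ℝ :=
      fun p => if col A p.2 ≤ p.1 then (Q p.2).coeff (p.1 - col A p.2) else 0 with hh
    set W : Finset ((Fin m →₀ ℕ) × Fin n) :=
      (T ×ˢ Finset.univ).filter (fun p => (Q p.2).coeff p.1 ≠ 0) with hW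
    have step1 : ∑ p ∈ T ×ˢ Finset.univ, (Q p.2).coeff p.1 =
        ∑ p ∈ W, (Q p.2).coeff p.1 :=
      (Finset.sum_filter_ne_zero _).symm
    set e : (Fin m →₀ ℕ) × Fin n → (Fin m →₀ ℕ) × Fin n :=
      fun p => (p.1 + col A p.2, p.2) with he
    have einj : Function.Injective e := by
      intro p q hpq
      simp only [he, Prod.mk.injEq] at hpq
      obtain ⟨h1, h2⟩ := hpq
      rw [h2] at h1
      exact Prod.ext (add_right_cancel h1) h2
    have step2 : ∑ p ∈ W, (Q p.2).coeff p.1 = ∑ p ∈ W.image e, h p := by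
      rw [Finset.sum_image (fun p _ q _ hpq => einj hpq)]
      refine Finset.sum_congr rfl (fun p hp => ?_)
      simp only [hh, he]
      rw [if_pos le_add_self, add_tsub_cancel_right]
    have step3 : ∑ p ∈ W.image e, h p ≤ ∑ p ∈ T ×ˢ Finset.univ, h p := by
      apply Finset.sum_le_sum_of_subset_of_nonneg
      · intro q hq
        obtain ⟨p, hp, rfl⟩ := Finset.mem_image.mp hq
        obtain ⟨hpT, hpne⟩ := Finset.mem_filter.mp hp
        obtain ⟨hp1, _⟩ := Finset.mem_product.mp hpT
        exact Finset.mem_product.mpr ⟨closure p.1 hp1 p.2 hpne, Finset.mem_univ _⟩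
      · intro q _ _
        simp only [hh]
        split_ifs
        · exact hpos _ _
        · exact le_rfl
    calc ∑ p ∈ T ×ˢ Finset.univ, (Q p.2).coeff p.1
        = ∑ p ∈ W.image e, h p := by rw [step1, step2]
      _ ≤ ∑ p ∈ T ×ˢ Finset.univ, h p := step3
  linarith

end DiscreteFarkasAux

open DiscreteFarkasAux in
theorem discrete_farkas_as_LP
    (m n : ℕ) (A : Matrix (Fin m) (Fin n) ℕ) (b : Fin m → ℕ) :
    (∃ x : Fin n → ℕ, ∀ i, ∑ j, A i j * x j = b i) ↔
    (∃ Q : Fin n → MvPolynomial (Fin m) ℝ,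
      (∀ j d, 0 ≤ (Q j).coeff d) ∧
      (∀ j, (Q j).totalDegree ≤ (∑ i, b i) - ⨅ k, ∑ i, A i k) ∧
      ∀ γ : Fin m →₀ ℕ,
        (∑ j, Q j * ((∏ i, X i ^ A i j) - 1)).coeff γ =
        ((∏ i, X i ^ b i : MvPolynomial (Fin m) ℝ) - 1).coeff γ) := by
  have hcolprod : ∀ j, (∏ i, (X i : MvPolynomial (Fin m) ℝ) ^ A i j) =
      monomial (col A j) 1 := fun j => prod_pow _
  set bF : Fin m →₀ ℕ := Finsupp.equivFunOnFinite.symm b with hbF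
  have hbprod : (∏ i, (X i : MvPolynomial (Fin m) ℝ) ^ b i) = monomial bF 1 :=
    prod_pow _
  have hbFapp : ∀ i, bF i = b i := fun _ => rfl
  constructor
  · rintro ⟨x, hx⟩
    obtain ⟨Q, hpos, hsupp, heq⟩ := forward A (∑ j, x j) x le_rfl
    have hbx : (∑ k, x k • col A k) = bF := by
      ext i
      rw [Finsupp.finset_sum_apply]
      simp only [Finsupp.smul_apply, col_apply, smul_eq_mul, hbFapp]
      rw [← hx i]
      exact Finset.sum_congr rfl (fun k _ => mul_comm _ _)
    rw [hbx] at hsupp heq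
    refine ⟨Q, hpos, ?_, ?_⟩
    · intro j
      rw [totalDegree]
      apply Finset.sup_le
      intro α hα
      have hle := hsupp j α hα
      have hsum : (∑ i, α i) + (∑ i, A i j) ≤ ∑ i, b i := by
        rw [← Finset.sum_add_distrib]
        apply Finset.sum_le_sum
        intro i _
        have := hle i
        rw [Finsupp.add_apply, col_apply, hbFapp] at this
        exact this
      have hsum2 : α.sum (fun _ e => e) = ∑ i, α i :=
        Finsupp.sum_fintype _ _ (fun _ => rfl)
      have hinf : (⨅ k, ∑ i, A i k) ≤ ∑ i, A i j :=
        ciInf_le (OrderBot.bddBelow _) j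
      rw [hsum2]
      have h1 : (∑ i, α i) ≤ (∑ i, b i) - ∑ i, A i j := Nat.le_sub_of_add_le hsum
      exact h1.trans (Nat.sub_le_sub_left hinf _)
    · intro γ
      simp only [hcolprod, hbprod]
      rw [heq]
  · rintro ⟨Q, hpos, _, hco⟩
    have heq : ∑ j, Q j * (monomial (col A j) 1 - 1) = monomial bF (1 : ℝ) - 1 := by
      apply MvPolynomial.ext
      intro γ
      have := hco γ
      simp only [hcolprod, hbprod] at this
      exact this
    obtain ⟨x, hx⟩ := backward A bF Q hpos heq
    exact ⟨x, fun i => (hx i).trans (hbFapp i)⟩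
end

section
/- Let A ∈ ℕ^{m×n} and b ∈ ℕ^m. If z^b - 1 = ∑_{j=1}^n Q_j(z)(z^{A_j} - 1) for some polynomials Q_j ∈ ℝ[z_1,…,z_m] with nonnegative coefficients, then such a representation also exists with all Q_j having coefficients in {0,1} (in particular, in ℤ with nonnegative entries). -/
open MvPolynomial

namespace ZeroOneRep

variable {m n : ℕ}

def deg (f : Fin m →₀ ℕ) : ℕ := ∑ i, f i

lemma deg_add (f g : Fin m →₀ ℕ) : deg (f + g) = deg f + deg g := by
  simp [deg, Finset.sum_add_distrib]

lemma deg_pos {f : Fin m →₀ ℕ} (hf : f ≠ 0) : 0 < deg f := by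
  rcases Finsupp.ne_iff.mp hf with ⟨i, hi⟩
  simp only [Finsupp.coe_zero, Pi.zero_apply] at hi
  exact lt_of_lt_of_le (Nat.pos_of_ne_zero hi)
    (Finset.single_le_sum (fun j _ => Nat.zero_le _) (Finset.mem_univ i))

lemma prod_X_pow (f : Fin m → ℕ) :
    (∏ i, X i ^ f i : MvPolynomial (Fin m) ℝ) =
      monomial (Finsupp.equivFunOnFinite.symm f) 1 := by
  rw [← prod_X_pow_eq_monomial]
  symm
  refine Finset.prod_subset (Finset.subset_univ _) fun i _ hi => ?_
  rw [Finsupp.notMem_support_iff.mp hi, pow_zero]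

inductive Reach (col : Fin n → (Fin m →₀ ℕ)) (ok : Fin n → (Fin m →₀ ℕ) → Prop) :
    (Fin m →₀ ℕ) → Prop
  | zero : Reach col ok 0
  | step (γ : Fin m →₀ ℕ) (j : Fin n) : Reach col ok γ → ok j γ → Reach col ok (γ + col j)

lemma reach_rep (col : Fin n → (Fin m →₀ ℕ)) (ok : Fin n → (Fin m →₀ ℕ) → Prop)
    (γ : Fin m →₀ ℕ) (hγ : Reach col ok γ) :
    ∃ S : Fin n → Finset (Fin m →₀ ℕ),
      ((monomial γ (1:ℝ) - 1 =
        ∑ j, (∑ d ∈ S j, monomial d (1:ℝ)) * (monomial (col j) 1 - 1)) ∧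
      ∀ j, ∀ d ∈ S j, deg d < deg γ) := by
  induction hγ with
  | zero => exact ⟨fun _ => ∅, by simp, by simp⟩
  | step γ j hγ hok ih =>
    obtain ⟨S, hS, hdeg⟩ := ih
    by_cases hc : col j = 0
    · exact ⟨S, by simpa [hc] using hS, by simpa [hc] using hdeg⟩
    · have hγnot : γ ∉ S j := fun hmem => lt_irrefl _ (hdeg j γ hmem)
      refine ⟨fun j' => if j' = j then insert γ (S j) else S j', ?_, ?_⟩
      · have key : ∀ j' : Fin n,
            (∑ d ∈ (if j' = j then insert γ (S j) else S j'), monomial d (1:ℝ)) *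
              (monomial (col j') 1 - 1) =
            (∑ d ∈ S j', monomial d (1:ℝ)) * (monomial (col j') 1 - 1) +
              (if j' = j then monomial γ 1 * (monomial (col j) 1 - 1) else 0) := by
          intro j'
          by_cases hj : j' = j
          · subst hj
            rw [if_pos rfl, if_pos rfl, Finset.sum_insert hγnot]
            ring
          · simp [hj]
        rw [Finset.sum_congr rfl fun j' _ => key j', Finset.sum_add_distrib, ← hS,
          Finset.sum_ite_eq' Finset.univ j, if_pos (Finset.mem_univ j)]
        have hmul : monomial (γ + col j) (1:ℝ) = monomial γ 1 * monomial (col j) 1 := by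
          rw [monomial_mul, one_mul]
        rw [hmul]; ring
      · intro j' d hd
        dsimp only at hd
        have hlt : deg γ < deg (γ + col j) := by
          rw [deg_add]
          exact Nat.lt_add_of_pos_right (deg_pos hc)
        by_cases hj : j' = j
        · subst hj
          rw [if_pos rfl, Finset.mem_insert] at hd
          rcases hd with rfl | hd
          · exact hlt
          · exact lt_trans (hdeg _ _ hd) hlt
        · rw [if_neg hj] at hd
          exact lt_trans (hdeg _ _ hd) hlt

end ZeroOneRep
theorem zero_one_representation
    (m n : ℕ) (A : Matrix (Fin m) (Fin n) ℕ) (b : Fin m → ℕ)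
    (Q : Fin n → MvPolynomial (Fin m) ℝ)
    (hQ : ∀ j d, 0 ≤ (Q j).coeff d)
    (h : (∏ i, X i ^ b i : MvPolynomial (Fin m) ℝ) - 1 =
        ∑ j, Q j * ((∏ i, X i ^ A i j) - 1)) :
    ∃ P : Fin n → MvPolynomial (Fin m) ℝ,
      (∀ j d, (P j).coeff d = 0 ∨ (P j).coeff d = 1) ∧
      (∏ i, X i ^ b i : MvPolynomial (Fin m) ℝ) - 1 =
        ∑ j, P j * ((∏ i, X i ^ A i j) - 1) := by
  classical
  set B : Fin m →₀ ℕ := Finsupp.equivFunOnFinite.symm b with hB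
  set col : Fin n → (Fin m →₀ ℕ) :=
    fun j => Finsupp.equivFunOnFinite.symm (fun i => A i j) with hcol
  have hm : monomial B (1:ℝ) - 1 = ∑ j, Q j * (monomial (col j) 1 - 1) := by
    rw [← ZeroOneRep.prod_X_pow]
    simpa only [ZeroOneRep.prod_X_pow] using h
  set ok : Fin n → (Fin m →₀ ℕ) → Prop := fun j γ => γ ∈ (Q j).support with hok
  -- coefficient identity
  have hcoeff : ∀ γ : Fin m →₀ ℕ,
      (if B = γ then (1:ℝ) else 0) - (if 0 = γ then 1 else 0) =
      ∑ j, ((if col j ≤ γ then (Q j).coeff (γ - col j) else 0) - (Q j).coeff γ) := by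
    intro γ
    have hc := congrArg (coeff γ) hm
    simpa only [coeff_sub, coeff_sum, coeff_monomial, coeff_one, mul_sub, mul_one,
      coeff_mul_monomial'] using hc
  set T : Finset (Fin m →₀ ℕ) :=
    ((Finset.univ.biUnion fun j => (Q j).support ∪ (Q j).support.image (· + col j)) ∪
      {0, B}).filter (fun γ => ZeroOneRep.Reach col ok γ) with hT
  have h0T : (0 : Fin m →₀ ℕ) ∈ T := by
    rw [hT, Finset.mem_filter]
    exact ⟨Finset.mem_union_right _ (by simp), ZeroOneRep.Reach.zero⟩
  -- sum the identity over T
  have hsum : ∑ γ ∈ T, ((if B = γ then (1:ℝ) else 0) - (if 0 = γ then 1 else 0)) =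
      ∑ γ ∈ T, ∑ j, ((if col j ≤ γ then (Q j).coeff (γ - col j) else 0) - (Q j).coeff γ) :=
    Finset.sum_congr rfl fun γ _ => hcoeff γ
  have hL : ∑ γ ∈ T, ((if B = γ then (1:ℝ) else 0) - (if 0 = γ then 1 else 0)) =
      (if B ∈ T then (1:ℝ) else 0) - 1 := by
    rw [Finset.sum_sub_distrib, Finset.sum_ite_eq T B fun _ => (1:ℝ),
      Finset.sum_ite_eq T 0 fun _ => (1:ℝ), if_pos h0T]
  have hR : 0 ≤ ∑ γ ∈ T, ∑ j, ((if col j ≤ γ then (Q j).coeff (γ - col j) else 0) -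
      (Q j).coeff γ) := by
    rw [Finset.sum_comm]
    refine Finset.sum_nonneg fun j _ => ?_
    rw [Finset.sum_sub_distrib, sub_nonneg]
    have hinj : Function.Injective (· + col j) := fun a b hab => by
      ext i
      have := congrArg (fun f : Fin m →₀ ℕ => f i) hab
      simpa using this
    calc ∑ γ ∈ T, (Q j).coeff γ
        = ∑ γ ∈ T.filter (fun γ => γ ∈ (Q j).support), (Q j).coeff γ := by
          refine (Finset.sum_filter_of_ne fun γ _ hne => ?_).symm
          exact MvPolynomial.mem_support_iff.mpr hne
      _ = ∑ γ ∈ (T.filter (fun γ => γ ∈ (Q j).support)).image (· + col j),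
            (if col j ≤ γ then (Q j).coeff (γ - col j) else 0) := by
          rw [Finset.sum_image fun a _ b _ hab => hinj hab]
          refine Finset.sum_congr rfl fun δ _ => ?_
          rw [if_pos le_add_self, add_tsub_cancel_right]
      _ ≤ ∑ γ ∈ T, (if col j ≤ γ then (Q j).coeff (γ - col j) else 0) := by
          refine Finset.sum_le_sum_of_subset_of_nonneg ?_ fun γ _ _ => ?_
          · intro γ hγ
            rw [Finset.mem_image] at hγ
            obtain ⟨δ, hδ, rfl⟩ := hγ
            rw [Finset.mem_filter] at hδ
            obtain ⟨hδT, hδsupp⟩ := hδ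
            rw [hT, Finset.mem_filter] at hδT ⊢
            constructor
            · refine Finset.mem_union_left _ ?_
              refine Finset.mem_biUnion.mpr ⟨j, Finset.mem_univ j, ?_⟩
              exact Finset.mem_union_right _ (Finset.mem_image_of_mem _ hδsupp)
            · exact ZeroOneRep.Reach.step δ j hδT.2 hδsupp
          · split
            · exact hQ j _
            · exact le_refl 0
  have hBT : B ∈ T := by
    by_contra hB'
    rw [hL, if_neg hB'] at hsum
    rw [← hsum] at hR
    norm_num at hR
  have hreach : ZeroOneRep.Reach col ok B := (Finset.mem_filter.mp hBT).2
  obtain ⟨S, hS, -⟩ := ZeroOneRep.reach_rep col ok B hreach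
  refine ⟨fun j => ∑ d ∈ S j, monomial d (1:ℝ), ?_, ?_⟩
  · intro j e
    have : (∑ d ∈ S j, monomial d (1:ℝ)).coeff e = if e ∈ S j then 1 else 0 := by
      rw [coeff_sum]
      simp_rw [coeff_monomial]
      exact Finset.sum_ite_eq' (S j) e fun _ => (1:ℝ)
    rw [this]
    split
    · right; rfl
    · left; rfl
  · simpa only [ZeroOneRep.prod_X_pow] using hS
end
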